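/- Let G be a finite group and φ an endomorphism of G. Define a_k = [ker^(k)(φ) : ker^(k−1)(φ)]. Then for all positive integers n ≤ m, a_m divides a_n. -/

import Mathlib

/-- The index `a_k = [ker^(k)(φ) : ker^(k-1)(φ)]` of consecutive iterated kernels. -/
noncomputable def kerIdx {G : Type*} [Group G] (φ : Monoid.End G) (k : ℕ) : ℕ :=
  (MonoidHom.ker (φ ^ (k - 1))).relIndex (MonoidHom.ker (φ ^ k))

open Subgroup MonoidHom in
lemma kerIdx_step {G : Type*} [Group G] [Finite G] (φ : Monoid.End G) (k : ℕ) :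
    kerIdx φ (k + 2) ∣ kerIdx φ (k + 1) := by
  set N : Subgroup (ker (φ ^ (k+1))) := (ker (φ ^ k)).subgroupOf (ker (φ ^ (k+1))) with hN
  haveI : N.Normal := Subgroup.Normal.subgroupOf (MonoidHom.normal_ker _) _
  have hmem : ∀ x : ker (φ ^ (k+2)), φ (x : G) ∈ ker (φ ^ (k+1)) := by
    intro x
    have hx : (φ ^ (k+2)) (x : G) = 1 := x.2
    change (φ ^ (k+1)) (φ (x : G)) = 1
    exact (DFunLike.congr_fun (pow_succ φ (k+1)) (x : G)).symm.trans hx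
  let g : ker (φ ^ (k+2)) →* ker (φ ^ (k+1)) :=
    ((φ : G →* G).comp (ker (φ ^ (k+2))).subtype).codRestrict _ hmem
  let f : ker (φ ^ (k+2)) →* (ker (φ ^ (k+1))) ⧸ N := (QuotientGroup.mk' N).comp g
  have hker : ker f = (ker (φ ^ (k+1))).subgroupOf (ker (φ ^ (k+2))) := by
    ext x
    have h1 : (φ ^ k) (φ (x : G)) = (φ ^ (k+1)) (x : G) := by
      exact (DFunLike.congr_fun (pow_succ φ k) (x : G)).symm
    simp only [f, g, MonoidHom.mem_ker, MonoidHom.comp_apply, QuotientGroup.mk'_apply,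
      QuotientGroup.eq_one_iff, hN, mem_subgroupOf, MonoidHom.codRestrict_apply,
      MonoidHom.coe_comp, Function.comp_apply, coe_subtype, mem_subgroupOf]
    change (φ ^ k) (φ (x : G)) = 1 ↔ (φ ^ (k+1)) (x : G) = 1
    rw [h1]
  have hdvd : Nat.card (ker (φ ^ (k+2)) ⧸ ker f) ∣ Nat.card ((ker (φ ^ (k+1))) ⧸ N) :=
    Subgroup.card_dvd_of_injective (QuotientGroup.kerLift f) (QuotientGroup.kerLift_injective f)
  have e1 : kerIdx φ (k+2) = Nat.card (ker (φ ^ (k+2)) ⧸ ker f) := by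
    rw [hker]; rfl
  have e2 : kerIdx φ (k+1) = Nat.card ((ker (φ ^ (k+1))) ⧸ N) := rfl
  rw [e1, e2]; exact hdvd

theorem kerIdx_dvd (G : Type*) [Group G] [Finite G] (φ : Monoid.End G)
    (n m : ℕ) (hn : 1 ≤ n) (hnm : n ≤ m) : kerIdx φ m ∣ kerIdx φ n := by
  induction m, hnm using Nat.le_induction with
  | base => exact dvd_refl _
  | succ m hm ih =>
    obtain ⟨j, rfl⟩ : ∃ j, m = j + 1 := ⟨m - 1, by omega⟩
    exact dvd_trans (kerIdx_step φ j) ih
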